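/- Define P(s) := P^b · (s·Hᵀ R⁻¹ H P^b + I)⁻¹ for s ≥ 0. Then P is differentiable on [0,∞), satisfies the matrix Riccati differential equation dP/ds = − P Hᵀ R⁻¹ H P, and satisfies the initial condition P(0) = P^b. -/

import Mathlib

open Matrix

attribute [local instance] Matrix.normedAddCommGroup Matrix.normedSpace

private lemma posSemidef_smul_nonneg {n : ℕ} {A : Matrix (Fin n) (Fin n) ℝ}
    (hA : A.PosSemidef) {c : ℝ} (hc : 0 ≤ c) : (c • A).PosSemidef := by
  refine ⟨?_, fun x => ?_⟩
  · have h1 := hA.1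
    unfold Matrix.IsHermitian at h1 ⊢
    rw [conjTranspose_smul, h1]
    simp
  · have h := mul_nonneg hc (hA.2 x)
    simp only [Finsupp.sum, Finset.mul_sum, Matrix.smul_apply, smul_eq_mul] at h ⊢
    convert h using 1
    refine Finset.sum_congr rfl fun i _ => Finset.sum_congr rfl fun j _ => ?_
    ring

/-- `P(s) := P^b (s·Hᵀ R⁻¹ H P^b + I)⁻¹` is differentiable on `[0,∞)`, satisfies the
matrix Riccati equation `dP/ds = − P Hᵀ R⁻¹ H P` there, and satisfies `P(0) = P^b`. -/
theorem stmt_1 {N L : ℕ}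
    (Pb : Matrix (Fin N) (Fin N) ℝ) (H : Matrix (Fin L) (Fin N) ℝ)
    (R : Matrix (Fin L) (Fin L) ℝ)
    (hPb : Pb.PosSemidef) (hR : R.PosDef)
    (P : ℝ → Matrix (Fin N) (Fin N) ℝ)
    (hP : ∀ s : ℝ, P s = Pb * (s • (Hᵀ * R⁻¹ * H * Pb) + 1)⁻¹) :
    (∀ s ∈ Set.Ici (0:ℝ),
      HasDerivWithinAt P (-(P s * Hᵀ * R⁻¹ * H * P s)) (Set.Ici 0) s) ∧
    P 0 = Pb := by
  set A : Matrix (Fin N) (Fin N) ℝ := Hᵀ * R⁻¹ * H with hAdef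
  set M : Matrix (Fin N) (Fin N) ℝ := Hᵀ * R⁻¹ * H * Pb with hMdef
  set g : ℝ → Matrix (Fin N) (Fin N) ℝ := fun s => s • M + 1 with hgdef
  -- positive semidefiniteness of A
  have hApsd : A.PosSemidef := by
    have h1 : (Hᴴ * R⁻¹ * H).PosSemidef := hR.inv.posSemidef.conjTranspose_mul_mul_same H
    simpa [conjTranspose_eq_transpose_of_trivial] using h1
  -- invertibility of g s for s ≥ 0
  have hdet : ∀ s : ℝ, 0 ≤ s → IsUnit (g s).det := by
    intro s hs
    set S := (open MatrixOrder in CFC.sqrt Pb) with hSdef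
    have hS : Sᴴ = S := (open MatrixOrder in (CFC.sqrt_nonneg Pb).posSemidef.isHermitian)
    have hsA : (s • A).PosSemidef := posSemidef_smul_nonneg hApsd hs
    have hSAS : (S * (s • A) * S).PosSemidef := by
      have := hsA.conjTranspose_mul_mul_same S
      rwa [hS] at this
    have hpd : (S * (s • A) * S + 1).PosDef :=
      Matrix.PosDef.posSemidef_add hSAS Matrix.PosDef.one
    have hdeteq : (g s).det = (S * (s • A) * S + 1).det := by
      have hM : s • M = (s • A) * Pb := by
        rw [hMdef, hAdef, smul_mul_assoc]
      have hPbS : Pb = S * S := (open MatrixOrder in (CFC.sqrt_mul_sqrt_self Pb hPb.nonneg).symm)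
      rw [hgdef]
      simp only
      rw [hM, hPbS, ← Matrix.mul_assoc, Matrix.det_mul_add_one_comm, ← Matrix.mul_assoc]
    rw [hdeteq]
    exact hpd.det_pos.ne'.isUnit
  -- continuity of the inverse on [0, ∞)
  have hgcont : Continuous g := by
    have : Continuous fun s : ℝ => s • M := continuous_id.smul continuous_const
    exact this.add continuous_const
  have hinvcont : ContinuousOn (fun t => (g t)⁻¹) (Set.Ici (0:ℝ)) := by
    have h1 : ContinuousOn (fun t => (g t).det⁻¹ • (g t).adjugate) (Set.Ici (0:ℝ)) := by
      refine ContinuousOn.fun_smul ?_ (hgcont.matrix_adjugate.continuousOn)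
      exact (hgcont.matrix_det.continuousOn).inv₀ fun t ht =>
        ((hdet t ht).ne_zero)
    refine h1.congr fun t ht => ?_
    rw [Matrix.inv_def, Ring.inverse_eq_inv']
  constructor
  · intro s hs
    have hsmem : (0:ℝ) ≤ s := hs
    refine hasDerivWithinAt_iff_tendsto_slope.mpr ?_
    set F : ℝ → Matrix (Fin N) (Fin N) ℝ :=
      fun t => -(Pb * ((g t)⁻¹ * M * (g s)⁻¹)) with hFdef
    have hFs : F s = -(P s * Hᵀ * R⁻¹ * H * P s) := by
      rw [hFdef, hP s]
      simp only [hgdef, hMdef, Matrix.mul_assoc]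
    have htendF : Filter.Tendsto F (nhdsWithin s (Set.Ici 0 \ {s})) (nhds (F s)) := by
      have h1 : Filter.Tendsto (fun t => (g t)⁻¹) (nhdsWithin s (Set.Ici 0)) (nhds ((g s)⁻¹)) :=
        hinvcont s hs
      have h2 : Filter.Tendsto (fun t => (g t)⁻¹) (nhdsWithin s (Set.Ici 0 \ {s}))
          (nhds ((g s)⁻¹)) :=
        h1.mono_left (nhdsWithin_mono _ Set.diff_subset)
      have hφ : Continuous fun X : Matrix (Fin N) (Fin N) ℝ =>
          -(Pb * (X * M * (g s)⁻¹)) := by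
        exact (continuous_const.matrix_mul
          ((continuous_id.matrix_mul continuous_const).matrix_mul continuous_const)).neg
      exact (hφ.continuousAt.tendsto.comp h2)
    rw [hFs] at htendF
    refine htendF.congr' ?_
    filter_upwards [self_mem_nhdsWithin] with t ht
    obtain ⟨ht0, hts⟩ := ht
    have hts' : t ≠ s := by simpa using hts
    -- compute the slope
    have hUs := hdet s hsmem
    have hUt := hdet t ht0
    have hdiff : (g t)⁻¹ - (g s)⁻¹ = (s - t) • ((g t)⁻¹ * M * (g s)⁻¹) := by
      have e1 : (g t)⁻¹ - (g s)⁻¹ = (g t)⁻¹ * (g s - g t) * (g s)⁻¹ := by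
        rw [Matrix.mul_sub, Matrix.sub_mul, Matrix.mul_assoc _ (g s) _,
          Matrix.mul_nonsing_inv _ hUs, Matrix.nonsing_inv_mul _ hUt]
        simp
      have e2 : g s - g t = (s - t) • M := by
        rw [hgdef]
        simp [sub_smul]
      rw [e1, e2, mul_smul_comm, smul_mul_assoc]
    have hPts : P t - P s = (s - t) • (Pb * ((g t)⁻¹ * M * (g s)⁻¹)) := by
      rw [hP t, hP s, ← Matrix.mul_sub]
      rw [show (t • M + 1)⁻¹ - (s • M + 1)⁻¹ = (g t)⁻¹ - (g s)⁻¹ from rfl, hdiff,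
        mul_smul_comm]
    show F t = slope P s t
    rw [slope_def_module, hPts, smul_smul, hFdef]
    have : (t - s)⁻¹ * (s - t) = -1 := by
      field_simp [sub_ne_zero.mpr hts']
      ring
    rw [this, neg_one_smul]
  · rw [hP 0]
    simp
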